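/- Under forward parallel untreated trends, E[Y1(0) − Y0(0) | D0 = d0] = τ0 for d0 ∈ {0,1}, the unobserved untreated trend among switchers into treatment can be expressed as E[Y1(0) − Y0(0) | D0 < D1] = [P(D1=1|D0=1)/P(D1=1|D0=0)]·E[Y1(0) − Y0(0) | D0 = D1 = 1] + [P(D1=0|D0=1)/P(D1=1|D0=0)]·E[Y1(0) − Y0(0) | D0 > D1] − [P(D1=0|D0=0)/P(D1=1|D0=0)]·E[Y1(0) − Y0(0) | D0 = D1 = 0]. -/
import Mathlib


open MeasureTheory ProbabilityTheory

/-- Conditional expectation of a real random variable `Y` given the event `A`. -/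
noncomputable def cexp {Ω : Type*} {mΩ : MeasurableSpace Ω} (μ : Measure Ω) (A : Set Ω)
    (Y : Ω → ℝ) : ℝ := ∫ ω, Y ω ∂(@ProbabilityTheory.cond Ω mΩ μ A)

lemma cexp_eq {Ω : Type*} {mΩ : MeasurableSpace Ω} (μ : Measure Ω) (A : Set Ω)
    (Y : Ω → ℝ) : cexp μ A Y = (μ A).toReal⁻¹ * ∫ ω in A, Y ω ∂μ := by
  unfold cexp
  rw [ProbabilityTheory.cond, integral_smul_measure]
  simp [ENNReal.toReal_inv]

/-- Under forward parallel untreated trends, the unobserved untreated trend among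
switchers into treatment is a linear combination of the untreated trends of the
always-treated, the switchers out of treatment, and the never-treated. -/
theorem stmt_11 {Ω : Type*} [MeasurableSpace Ω] (μ : Measure Ω) [IsProbabilityMeasure μ]
    (Y0 Y1 : Ω → ℝ) (hY0 : Integrable Y0 μ) (hY1 : Integrable Y1 μ)
    (D0 D1 : Ω → ℕ) (hD0 : ∀ ω, D0 ω ≤ 1) (hD1 : ∀ ω, D1 ω ≤ 1)
    (hD0m : Measurable D0) (hD1m : Measurable D1)
    (hpos : ∀ d0 d1 : ℕ, d0 ≤ 1 → d1 ≤ 1 → 0 < μ {ω | D0 ω = d0 ∧ D1 ω = d1})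
    (τ0 : ℝ)
    -- forward parallel untreated trends
    (hfpt : ∀ d0 : ℕ, d0 ≤ 1 →
      cexp μ {ω | D0 ω = d0} (fun ω => Y1 ω - Y0 ω) = τ0) :
    cexp μ {ω | D0 ω = 0 ∧ D1 ω = 1} (fun ω => Y1 ω - Y0 ω)
      =
      ((μ[|{ω | D0 ω = 1}]) {ω | D1 ω = 1}).toReal
          / ((μ[|{ω | D0 ω = 0}]) {ω | D1 ω = 1}).toReal
        * cexp μ {ω | D0 ω = 1 ∧ D1 ω = 1} (fun ω => Y1 ω - Y0 ω)
      + ((μ[|{ω | D0 ω = 1}]) {ω | D1 ω = 0}).toReal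
          / ((μ[|{ω | D0 ω = 0}]) {ω | D1 ω = 1}).toReal
        * cexp μ {ω | D0 ω = 1 ∧ D1 ω = 0} (fun ω => Y1 ω - Y0 ω)
      - ((μ[|{ω | D0 ω = 0}]) {ω | D1 ω = 0}).toReal
          / ((μ[|{ω | D0 ω = 0}]) {ω | D1 ω = 1}).toReal
        * cexp μ {ω | D0 ω = 0 ∧ D1 ω = 0} (fun ω => Y1 ω - Y0 ω) := by
  set Y : Ω → ℝ := fun ω => Y1 ω - Y0 ω with hYdef
  have hY : Integrable Y μ := hY1.sub hY0
  -- sets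
  set A : ℕ → ℕ → Set Ω := fun i j => {ω | D0 ω = i ∧ D1 ω = j} with hA
  have hAm : ∀ i j, MeasurableSet (A i j) := fun i j =>
    (hD0m (measurableSet_singleton i)).inter (hD1m (measurableSet_singleton j))
  have hB0m : MeasurableSet {ω | D0 ω = (0:ℕ)} := hD0m (measurableSet_singleton 0)
  have hB1m : MeasurableSet {ω | D0 ω = (1:ℕ)} := hD0m (measurableSet_singleton 1)
  have hsplit : ∀ i : ℕ, {ω | D0 ω = i} = A i 0 ∪ A i 1 := by
    intro i
    ext ω
    have := hD1 ω
    simp only [Set.mem_setOf_eq, Set.mem_union, hA]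
    omega
  have hdisj : ∀ i : ℕ, Disjoint (A i 0) (A i 1) := by
    intro i
    rw [Set.disjoint_left]
    rintro ω ⟨_, h0⟩ ⟨_, h1⟩
    simp_all
  -- scalars
  set a : ℕ → ℕ → ℝ := fun i j => (μ (A i j)).toReal with ha
  set S : ℕ → ℕ → ℝ := fun i j => ∫ ω in A i j, Y ω ∂μ with hS
  have hane : ∀ i j, i ≤ 1 → j ≤ 1 → 0 < a i j := by
    intro i j hi hj
    exact ENNReal.toReal_pos (hpos i j hi hj).ne' (measure_ne_top μ _)
  have hμsplit : ∀ i : ℕ, (μ {ω | D0 ω = i}).toReal = a i 0 + a i 1 := by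
    intro i
    rw [hsplit i, measure_union (hdisj i) (hAm i 1), ENNReal.toReal_add (measure_ne_top μ _) (measure_ne_top μ _)]
  have hIsplit : ∀ i : ℕ, ∫ ω in {ω | D0 ω = i}, Y ω ∂μ = S i 0 + S i 1 := by
    intro i
    rw [hsplit i, setIntegral_union (hdisj i) (hAm i 1) hY.integrableOn hY.integrableOn]
  -- fpt in scalar form
  have hfpt' : ∀ i : ℕ, i ≤ 1 → S i 0 + S i 1 = τ0 * (a i 0 + a i 1) := by
    intro i hi
    have h := hfpt i hi
    rw [cexp_eq, hIsplit, hμsplit] at h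
    have hpos' : 0 < a i 0 + a i 1 := by
      have h0 := hane i 0 hi (by norm_num)
      have h1 := hane i 1 hi (by norm_num)
      linarith
    rw [inv_mul_eq_div, div_eq_iff hpos'.ne'] at h
    linarith
  -- conditional probabilities
  have hcond : ∀ i j : ℕ, ((μ[|{ω | D0 ω = i}]) {ω | D1 ω = j}).toReal
      = a i j / (a i 0 + a i 1) := by
    intro i j
    have hm : MeasurableSet {ω : Ω | D0 ω = i} := hD0m (measurableSet_singleton i)
    rw [ProbabilityTheory.cond_apply hm]
    have hset : {ω | D0 ω = i} ∩ {ω | D1 ω = j} = A i j := rfl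
    rw [hset, ENNReal.toReal_mul, ENNReal.toReal_inv, hμsplit i]
    ring
  -- cexp in scalar form
  have hcexp : ∀ i j : ℕ, cexp μ (A i j) Y = (a i j)⁻¹ * S i j := fun i j => cexp_eq ..
  have e01 := hcexp 0 1
  have e11 := hcexp 1 1
  have e10 := hcexp 1 0
  have e00 := hcexp 0 0
  show cexp μ (A 0 1) Y = _
  rw [e01]
  show _ = _ * cexp μ (A 1 1) Y + _ * cexp μ (A 1 0) Y - _ * cexp μ (A 0 0) Y
  rw [e11, e10, e00, hcond 0 0, hcond 0 1, hcond 1 0, hcond 1 1]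
  have p00 := hane 0 0 (by norm_num) (by norm_num)
  have p01 := hane 0 1 (by norm_num) (by norm_num)
  have p10 := hane 1 0 (by norm_num) (by norm_num)
  have p11 := hane 1 1 (by norm_num) (by norm_num)
  have h0 := hfpt' 0 (by norm_num)
  have h1 := hfpt' 1 (by norm_num)
  have hS01 : S 0 1 = τ0 * (a 0 0 + a 0 1) - S 0 0 := by linarith
  have hS11 : S 1 1 = τ0 * (a 1 0 + a 1 1) - S 1 0 := by linarith
  rw [hS01, hS11]
  have ht0 : a 0 0 + a 0 1 ≠ 0 := by positivity
  have ht1 : a 1 0 + a 1 1 ≠ 0 := by positivity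
  field_simp
  ring
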